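/- (Binomial decomposition of the multinomial) Let τ ≥ 1 and let P : {1,…,τ} → ℝ be a probability distribution, i.e. P(k) ≥ 0 for all k and ∑_{k=1}^{τ} P(k) = 1. Define the tail sums P̂(k) = ∑_{j=k}^{τ} P(j), assume P̂(k) > 0 for every k, and set Q(k) = P(k)/P̂(k). Fix a natural number N and counts n : {1,…,τ} → ℕ with ∑_{j=1}^{τ} n(j) = N, and define E(k) = N − ∑_{j=1}^{k-1} n(j), so E(1) = N. Then the multinomial probability mass function at n equals a product of binomial probability mass functions: (N! / ∏_{j=1}^{τ} n(j)!) · ∏_{j=1}^{τ} P(j)^{n(j)} = ∏_{k=1}^{τ} [ C(E(k), n(k)) · Q(k)^{n(k)} · (1 − Q(k))^{E(k) − n(k)} ], where C(m, r) denotes the binomial coefficient. -/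

import Mathlib

/-- Auxiliary telescoping lemma: for any starting point `a` with `1 ≤ a ≤ τ+1`,
the product of the binomial pmf terms over `Icc a τ`, multiplied by
`∏ (n j)!` and `Phat a ^ E a`, equals `(E a)! * ∏ P j ^ n j`. -/
lemma multinomial_binomial_aux
    (τ : ℕ) (P Phat Q : ℕ → ℝ)
    (hPhat : ∀ k, Phat k = ∑ j ∈ Finset.Icc k τ, P j)
    (hpos : ∀ k ∈ Finset.Icc 1 τ, 0 < Phat k)
    (hQ : ∀ k, Q k = P k / Phat k)
    (N : ℕ) (n : ℕ → ℕ)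
    (hn : ∑ j ∈ Finset.Icc 1 τ, n j = N)
    (E : ℕ → ℕ)
    (hE : ∀ k, E k = N - ∑ j ∈ Finset.Ico 1 k, n j) :
    ∀ d a, 1 ≤ a → a + d = τ + 1 →
      (∏ j ∈ Finset.Icc a τ, ((n j).factorial : ℝ)) * Phat a ^ (E a) *
        ∏ k ∈ Finset.Icc a τ,
          (((E k).choose (n k) : ℝ) * Q k ^ n k * (1 - Q k) ^ (E k - n k))
      = ((E a).factorial : ℝ) * ∏ j ∈ Finset.Icc a τ, P j ^ n j := by
  intro d
  induction d with
  | zero =>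
    intro a ha1 ha2
    have haτ : a = τ + 1 := by omega
    subst haτ
    have hEa : E (τ + 1) = 0 := by
      rw [hE, show Finset.Ico 1 (τ+1) = Finset.Icc 1 τ by rw [Finset.Ico_add_one_right_eq_Icc], hn]
      omega
    simp [Finset.Icc_eq_empty_of_lt (by omega : τ < τ + 1), hEa]
  | succ d ih =>
    intro a ha1 ha2
    have haτ : a ≤ τ := by omega
    -- sums
    have hsub : Finset.Ico 1 (a+1) ⊆ Finset.Ico 1 (τ+1) := by
      apply Finset.Ico_subset_Ico le_rfl; omega
    have hSle : ∑ j ∈ Finset.Ico 1 (a+1), n j ≤ N := by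
      calc ∑ j ∈ Finset.Ico 1 (a+1), n j ≤ ∑ j ∈ Finset.Ico 1 (τ+1), n j :=
            Finset.sum_le_sum_of_subset hsub
        _ = N := by rw [Finset.Ico_add_one_right_eq_Icc, hn]
    have hSsucc : ∑ j ∈ Finset.Ico 1 (a+1), n j = (∑ j ∈ Finset.Ico 1 a, n j) + n a :=
      Finset.sum_Ico_succ_top ha1 n
    have hm : n a ≤ E a := by rw [hE]; omega
    have hE' : E (a+1) = E a - n a := by rw [hE, hE, hSsucc]; omega
    -- Phat recursion
    have hPh : Phat a = P a + Phat (a+1) := by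
      rw [hPhat a, hPhat (a+1), ← Finset.Ico_add_one_right_eq_Icc, ← Finset.Ico_add_one_right_eq_Icc,
        Finset.sum_eq_sum_Ico_succ_bot (by omega : a < τ + 1) P]
    have hqpos : 0 < Phat a := hpos a (by simp; omega)
    have hqne : Phat a ≠ 0 := ne_of_gt hqpos
    have key : (1 : ℝ) - Q a = Phat (a+1) / Phat a := by
      rw [hQ]; field_simp; linarith [hPh]
    -- split the products over Icc a τ = Ico a (τ+1)
    have hsplit : ∀ f : ℕ → ℝ, ∏ j ∈ Finset.Icc a τ, f j = f a * ∏ j ∈ Finset.Icc (a+1) τ, f j := by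
      intro f
      rw [← Finset.Ico_add_one_right_eq_Icc, ← Finset.Ico_add_one_right_eq_Icc,
        Finset.prod_eq_prod_Ico_succ_bot (by omega : a < τ + 1) f]
    rw [hsplit fun j => ((n j).factorial : ℝ), hsplit fun j => P j ^ n j,
      hsplit fun k => (((E k).choose (n k) : ℝ) * Q k ^ n k * (1 - Q k) ^ (E k - n k))]
    have IH := ih (a+1) (by omega) (by omega)
    -- core single-step identity
    have hfrac : Q a ^ n a * (1 - Q a) ^ (E a - n a) * Phat a ^ E a
        = P a ^ n a * Phat (a+1) ^ (E a - n a) := by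
      rw [key, hQ, div_pow, div_pow, show E a = n a + (E a - n a) by omega, pow_add]
      field_simp
      simp only [Nat.add_sub_cancel_left]
    have hchoose : ((E a).choose (n a) : ℝ) * (n a).factorial * (E a - n a).factorial
        = (E a).factorial := by
      exact_mod_cast Nat.choose_mul_factorial_mul_factorial hm
    calc ((n a).factorial : ℝ) * (∏ j ∈ Finset.Icc (a+1) τ, ((n j).factorial : ℝ)) *
          Phat a ^ E a *
          ((((E a).choose (n a) : ℝ) * Q a ^ n a * (1 - Q a) ^ (E a - n a)) *
            ∏ k ∈ Finset.Icc (a+1) τ,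
              (((E k).choose (n k) : ℝ) * Q k ^ n k * (1 - Q k) ^ (E k - n k)))
        = ((n a).factorial : ℝ) * ((E a).choose (n a) : ℝ) *
            (Q a ^ n a * (1 - Q a) ^ (E a - n a) * Phat a ^ E a) *
            ((∏ j ∈ Finset.Icc (a+1) τ, ((n j).factorial : ℝ)) *
              ∏ k ∈ Finset.Icc (a+1) τ,
                (((E k).choose (n k) : ℝ) * Q k ^ n k * (1 - Q k) ^ (E k - n k))) := by ring
      _ = ((n a).factorial : ℝ) * ((E a).choose (n a) : ℝ) * (P a ^ n a) *
            ((∏ j ∈ Finset.Icc (a+1) τ, ((n j).factorial : ℝ)) * Phat (a+1) ^ (E (a+1)) *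
              ∏ k ∈ Finset.Icc (a+1) τ,
                (((E k).choose (n k) : ℝ) * Q k ^ n k * (1 - Q k) ^ (E k - n k))) := by
          rw [hfrac, hE']; ring
      _ = ((n a).factorial : ℝ) * ((E a).choose (n a) : ℝ) * (P a ^ n a) *
            (((E (a+1)).factorial : ℝ) * ∏ j ∈ Finset.Icc (a+1) τ, P j ^ n j) := by rw [IH]
      _ = (((E a).choose (n a) : ℝ) * (n a).factorial * (E a - n a).factorial) *
            (P a ^ n a * ∏ j ∈ Finset.Icc (a+1) τ, P j ^ n j) := by rw [hE']; ring
      _ = ((E a).factorial : ℝ) * (P a ^ n a * ∏ j ∈ Finset.Icc (a+1) τ, P j ^ n j) := by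
          rw [hchoose]

/-- Binomial decomposition of the multinomial: the multinomial
probability mass function at counts `n` equals the product over `k` of the
`Binomial (E k) (Q k)` probability mass functions evaluated at `n k`, where
`E k = N - ∑_{j=1}^{k-1} n j` and `Q k = P k / P̂ k`. -/
theorem multinomial_binomial_decomposition
    (τ : ℕ) (hτ : 1 ≤ τ)
    (P : ℕ → ℝ)
    (hP : ∀ k ∈ Finset.Icc 1 τ, 0 ≤ P k)
    (hsum : ∑ k ∈ Finset.Icc 1 τ, P k = 1)
    (Phat : ℕ → ℝ)
    (hPhat : ∀ k, Phat k = ∑ j ∈ Finset.Icc k τ, P j)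
    (hpos : ∀ k ∈ Finset.Icc 1 τ, 0 < Phat k)
    (Q : ℕ → ℝ)
    (hQ : ∀ k, Q k = P k / Phat k)
    (N : ℕ) (n : ℕ → ℕ)
    (hn : ∑ j ∈ Finset.Icc 1 τ, n j = N)
    (E : ℕ → ℕ)
    (hE : ∀ k, E k = N - ∑ j ∈ Finset.Ico 1 k, n j) :
    (N.factorial : ℝ) / (∏ j ∈ Finset.Icc 1 τ, ((n j).factorial : ℝ)) *
        ∏ j ∈ Finset.Icc 1 τ, P j ^ n j =
      ∏ k ∈ Finset.Icc 1 τ,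
        (((E k).choose (n k) : ℝ) * Q k ^ n k * (1 - Q k) ^ (E k - n k)) := by
  have h := multinomial_binomial_aux τ P Phat Q hPhat hpos hQ N n hn E hE τ 1 le_rfl (by omega)
  have hE1 : E 1 = N := by rw [hE]; simp
  have hP1 : Phat 1 = 1 := by rw [hPhat]; exact hsum
  rw [hE1, hP1, one_pow] at h
  have hfacne : (∏ j ∈ Finset.Icc 1 τ, ((n j).factorial : ℝ)) ≠ 0 := by
    apply Finset.prod_ne_zero_iff.mpr
    intro j _
    exact_mod_cast (n j).factorial_ne_zero
  field_simp
  linarith [h]
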